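/- Suppose F = (f_1,...,f_n)ᵗ is a vector-valued modular form of weight k for ρ and υ whose components are linearly independent over C. Then the set {F, D_k F, ..., D_k^{n-1} F} is linearly independent over the ring M of integral-weight modular forms for SL(2,Z), so these vectors generate a free M-submodule of rank n. -/

import Mathlib

set_option autoImplicit false

open Matrix MatrixGroups Complex Topology Filter

/-- The automorphy factor `J(γ,z) = c z + d` for `γ = [[a,b],[c,d]] ∈ SL(2,ℤ)`, `z ∈ ℍ`. -/
noncomputable def J (γ : SL(2,ℤ)) (z : UpperHalfPlane) : ℂ :=
  ((γ : Matrix (Fin 2) (Fin 2) ℤ) 1 0 : ℂ) * z + ((γ : Matrix (Fin 2) (Fin 2) ℤ) 1 1 : ℂ)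

/-- The Dedekind eta function `η(z) = q^{1/24} ∏_{n ≥ 1} (1 - q^n)`, `q = e^{2πiz}`,
regarded as a function of a complex variable (of interest for `Im z > 0`). -/
noncomputable def DedekindEta (z : ℂ) : ℂ :=
  Complex.exp (Real.pi * Complex.I * z / 12) *
    ∏' n : ℕ, (1 - Complex.exp (2 * Real.pi * Complex.I * ((n : ℂ) + 1) * z))

/-- The function `P(z) = (i/π) η'(z)/η(z)`. -/
noncomputable def Pfun (z : ℂ) : ℂ :=
  Complex.I / Real.pi * (deriv DedekindEta z / DedekindEta z)

/-- `υ : SL(2,ℤ) → ℂ` is a multiplier system of weight `k`: it takes values in the unit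
circle and `ν(γ,z) = υ(γ)(cz+d)^k` is a 1-cocycle (powers via the principal branch). -/
def IsMultiplierSystem (k : ℝ) (υ : SL(2,ℤ) → ℂ) : Prop :=
  (∀ γ, ‖υ γ‖ = 1) ∧
  ∀ γ σ : SL(2,ℤ), ∀ z : UpperHalfPlane,
    υ (γ * σ) * J (γ * σ) z ^ (k : ℂ) =
      υ γ * J γ (σ • z) ^ (k : ℂ) * (υ σ * J σ z ^ (k : ℂ))

/-- Holomorphy on the upper half-plane for a function of a complex variable. -/
def IsHolomorphicOnH (f : ℂ → ℂ) : Prop :=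
  ∀ z : ℂ, 0 < z.im → DifferentiableAt ℂ f z

/-- Moderate growth: `|f(x+iy)| ≤ y^N` for all `y > c`, for some positive `N`, `c`. -/
def IsModerateGrowth (f : ℂ → ℂ) : Prop :=
  ∃ (N : ℕ) (c : ℝ), 0 < N ∧ 0 < c ∧ ∀ z : ℂ, c < z.im → ‖f z‖ ≤ z.im ^ N

/-- A modular form of real weight `k` for the multiplier system `υ`: holomorphic on `ℍ`,
of moderate growth, and satisfying `f(γz) = υ(γ)(cz+d)^k f(z)`. -/
def IsModularFormMS (k : ℝ) (υ : SL(2,ℤ) → ℂ) (f : ℂ → ℂ) : Prop :=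
  IsHolomorphicOnH f ∧ IsModerateGrowth f ∧
    ∀ γ : SL(2,ℤ), ∀ z : UpperHalfPlane,
      f ((γ • z : UpperHalfPlane) : ℂ) = υ γ * J γ z ^ (k : ℂ) * f (z : ℂ)

/-- The modular derivative in weight `k`: `D_k f = (1/(2πi)) f' + k P f`. -/
noncomputable def Dk (k : ℝ) (f : ℂ → ℂ) : ℂ → ℂ :=
  fun z => 1 / (2 * Real.pi * Complex.I) * deriv f z + (k : ℂ) * Pfun z * f z

/-- A vector-valued modular form of weight `k` for the representation `ρ` and the
multiplier system `υ`: a vector of holomorphic, moderate-growth functions on `ℍ`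
satisfying `F(γz) = υ(γ)(cz+d)^k ρ(γ) F(z)`. -/
def IsVVModularForm {d : ℕ} (k : ℝ) (ρ : SL(2,ℤ) →* GL (Fin d) ℂ)
    (υ : SL(2,ℤ) → ℂ) (F : ℂ → Fin d → ℂ) : Prop :=
  (∀ i, IsHolomorphicOnH (fun z => F z i)) ∧
  (∀ i, IsModerateGrowth (fun z => F z i)) ∧
  ∀ γ : SL(2,ℤ), ∀ z : UpperHalfPlane,
    F ((γ • z : UpperHalfPlane) : ℂ) =
      fun i => υ γ * J γ z ^ (k : ℂ) *
        ((ρ γ).val.mulVec (F (z : ℂ))) i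

/-- Iterated modular derivative `D_k^n = D_{k+2(n-1)} ∘ ⋯ ∘ D_{k+2} ∘ D_k`. -/
noncomputable def DkIter (k : ℝ) : ℕ → (ℂ → ℂ) → ℂ → ℂ
  | 0 => fun f => f
  | n + 1 => fun f => Dk (k + 2 * n) (DkIter k n f)

/-- The modular Wronskian `W(F) = det (F, D_k F, …, D_k^{d-1} F)`. -/
noncomputable def ModularWronskian {d : ℕ} (k : ℝ) (F : ℂ → Fin d → ℂ) : ℂ → ℂ :=
  fun z => (Matrix.of fun i j : Fin d => DkIter k j (fun w => F w i) z).det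

/-- `ρ` is `T`-unitarizable: `ρ(T)` is conjugate to a unitary matrix. -/
def TUnitarizable {d : ℕ} (ρ : SL(2,ℤ) →* GL (Fin d) ℂ) : Prop :=
  ∃ u ∈ Matrix.unitaryGroup (Fin d) ℂ, ∃ P : GL (Fin d) ℂ,
    (ρ ModularGroup.T).val = P.val * u * (P⁻¹).val

/-- Irreducibility: the only invariant subspaces of `ℂ^d` are `0` and `ℂ^d`. -/
def RepIrreducible {d : ℕ} (ρ : SL(2,ℤ) →* GL (Fin d) ℂ) : Prop :=
  ∀ U : Submodule ℂ (Fin d → ℂ),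
    (∀ γ : SL(2,ℤ), ∀ v ∈ U, (ρ γ).val.mulVec v ∈ U) → U = ⊥ ∨ U = ⊤

def UH : Set ℂ := {z : ℂ | 0 < z.im}

lemma isOpen_UH : IsOpen UH := isOpen_lt continuous_const Complex.continuous_im

lemma preconnected_UH : IsPreconnected UH :=
  (convex_halfSpace_im_gt 0).isPreconnected

lemma expterm_re (n : ℕ) (z : ℂ) :
    (2 * (Real.pi : ℂ) * Complex.I * ((n : ℂ) + 1) * z).re
      = -(2 * Real.pi * ((n : ℝ) + 1) * z.im) := by
  simp [Complex.mul_re, Complex.mul_im]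

lemma eta_analyticAt_ne_zero {z₀ : ℂ} (hz₀ : 0 < z₀.im) :
    AnalyticAt ℂ DedekindEta z₀ ∧ DedekindEta z₀ ≠ 0 := by
  set t : ℝ := z₀.im / 2 with ht
  have ht0 : 0 < t := by positivity
  set ρ : ℝ := Real.exp (-(2 * Real.pi * t)) with hρ
  have hρ0 : 0 < ρ := Real.exp_pos _
  have hρ1 : ρ < 1 := by
    rw [hρ, Real.exp_lt_one_iff]
    nlinarith [Real.pi_pos]
  set U : Set ℂ := {z : ℂ | t < z.im} with hUdef
  have hU : IsOpen U := isOpen_lt continuous_const Complex.continuous_im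
  have hz₀U : z₀ ∈ U := by
    simp only [hUdef, Set.mem_setOf_eq, ht]
    linarith
  set a : ℕ → ℂ → ℂ :=
    fun n z => -Complex.exp (2 * Real.pi * Complex.I * ((n : ℂ) + 1) * z) with ha
  have hnorm : ∀ (n : ℕ), ∀ z ∈ U, ‖a n z‖ ≤ ρ ^ (n + 1) := by
    intro n z hz
    have hz' : t < z.im := hz
    rw [ha]
    simp only [norm_neg]
    rw [Complex.norm_exp, expterm_re]
    rw [hρ, ← Real.exp_nat_mul]
    apply Real.exp_le_exp.mpr
    push_cast
    have hn1 : (0:ℝ) ≤ (n:ℝ) + 1 := by positivity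
    have key : ((n:ℝ)+1) * (2*Real.pi*t) ≤ ((n:ℝ)+1) * (2*Real.pi*z.im) := by
      apply mul_le_mul_of_nonneg_left _ hn1
      nlinarith [Real.pi_pos]
    nlinarith [key]
  have hρn : ∀ n : ℕ, ρ ^ (n + 1) ≤ ρ := by
    intro n
    calc ρ ^ (n + 1) ≤ ρ ^ 1 := by
          apply pow_le_pow_of_le_one hρ0.le hρ1.le
          omega
      _ = ρ := pow_one ρ
  have hlt1 : ∀ (n : ℕ), ∀ z ∈ U, ‖a n z‖ < 1 := by
    intro n z hz
    calc ‖a n z‖ ≤ ρ ^ (n+1) := hnorm n z hz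
      _ ≤ ρ := hρn n
      _ < 1 := hρ1
  have hne : ∀ (n : ℕ), ∀ z ∈ U, 1 + a n z ≠ 0 := by
    intro n z hz h
    have h2 := hlt1 n z hz
    have ha1 : a n z = -1 := by linear_combination h
    rw [ha1] at h2
    simp at h2
  have hslit : ∀ (n : ℕ), ∀ z ∈ U, (1 + a n z) ∈ Complex.slitPlane := by
    intro n z hz
    rw [Complex.mem_slitPlane_iff]
    left
    have h1 : |(a n z).re| ≤ ‖a n z‖ := Complex.abs_re_le_norm _
    have h2 := hlt1 n z hz
    have : (1 + a n z).re = 1 + (a n z).re := by simp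
    rw [this]
    cases abs_le.mp h1 with
    | intro hl hr => linarith
  set C : ℝ := ρ * (1 - ρ)⁻¹ / 2 + 1 with hC
  have h1ρ : 0 < 1 - ρ := by linarith
  have h1ρi : 0 < (1 - ρ)⁻¹ := inv_pos.mpr h1ρ
  have hC0 : 0 < C := by
    have := mul_nonneg hρ0.le h1ρi.le
    rw [hC]
    linarith
  have hlog : ∀ (n : ℕ), ∀ z ∈ U, ‖Complex.log (1 + a n z)‖ ≤ C * ρ ^ (n + 1) := by
    intro n z hz
    have h1 := Complex.norm_log_one_add_le (hlt1 n z hz)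
    have hr1 : ‖a n z‖ ≤ ρ ^ (n + 1) := hnorm n z hz
    have hrρ : ‖a n z‖ ≤ ρ := le_trans hr1 (hρn n)
    have hinv : (1 - ‖a n z‖)⁻¹ ≤ (1 - ρ)⁻¹ := by
      apply inv_anti₀
      · linarith
      · linarith
    have h0 : (0:ℝ) ≤ ‖a n z‖ := norm_nonneg _
    have hinv0 : (0:ℝ) ≤ (1 - ‖a n z‖)⁻¹ := by
      have := hlt1 n z hz
      exact (inv_pos.mpr (by linarith)).le
    calc ‖Complex.log (1 + a n z)‖
        ≤ ‖a n z‖ ^ 2 * (1 - ‖a n z‖)⁻¹ / 2 + ‖a n z‖ := h1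
      _ ≤ ρ ^ (n+1) * ρ * (1 - ρ)⁻¹ / 2 + ρ ^ (n+1) := by
          have hsq : ‖a n z‖ ^ 2 ≤ ρ ^ (n+1) * ρ := by nlinarith
          have hρn1 : (0:ℝ) ≤ ρ ^ (n+1) * ρ := mul_nonneg (pow_nonneg hρ0.le _) hρ0.le
          nlinarith [mul_le_mul hsq hinv hinv0 hρn1]
      _ = C * ρ ^ (n+1) := by rw [hC]; ring
  have hsum : Summable (fun n : ℕ => C * ρ ^ (n + 1)) := by
    have h := (summable_geometric_of_lt_one hρ0.le hρ1).mul_left (C * ρ)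
    apply h.congr
    intro n
    rw [pow_succ]
    ring
  have hterms : ∀ n : ℕ, DifferentiableOn ℂ (fun z => Complex.log (1 + a n z)) U := by
    intro n z hz
    apply DifferentiableAt.differentiableWithinAt
    have hd : DifferentiableAt ℂ (fun z : ℂ => 1 + a n z) z := by
      apply DifferentiableAt.const_add
      apply DifferentiableAt.neg
      exact (Complex.differentiable_exp.comp
        ((differentiable_id.const_mul (2 * (Real.pi:ℂ) * Complex.I * ((n : ℂ) + 1))))).differentiableAt
    exact hd.clog (hslit n z hz)
  set L : ℂ → ℂ := fun z => ∑' n : ℕ, Complex.log (1 + a n z) with hL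
  have hLdiff : DifferentiableOn ℂ L U :=
    Complex.differentiableOn_tsum_of_summable_norm hsum hterms hU
      (fun n w hw => hlog n w hw)
  have hLsummable : ∀ z ∈ U, Summable fun n : ℕ => Complex.log (1 + a n z) := by
    intro z hz
    apply Summable.of_norm
    exact Summable.of_nonneg_of_le (fun n => norm_nonneg _) (fun n => hlog n z hz) hsum
  have hprod : ∀ z ∈ U,
      (∏' n : ℕ, (1 - Complex.exp (2 * Real.pi * Complex.I * ((n : ℂ) + 1) * z)))
        = Complex.exp (L z) := by
    intro z hz
    have hfun : (fun n : ℕ => 1 - Complex.exp (2 * Real.pi * Complex.I * ((n:ℂ)+1) * z))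
        = fun n => 1 + a n z := by
      funext n; rw [ha]; ring
    have hs : HasSum (fun n => Complex.log (1 + a n z)) (L z) := (hLsummable z hz).hasSum
    have hp : HasProd (fun n => 1 + a n z) (Complex.exp (L z)) := by
      have h2 := hs.cexp
      rwa [show (cexp ∘ fun n => Complex.log (1 + a n z)) = fun n => 1 + a n z from
        funext fun n => Complex.exp_log (hne n z hz)] at h2
    rw [hfun]
    exact hp.tprod_eq
  have hEeq : Set.EqOn DedekindEta
      (fun z => Complex.exp (Real.pi * Complex.I * z / 12) * Complex.exp (L z)) U := by
    intro z hz
    rw [DedekindEta, hprod z hz]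
  have hgdiff : DifferentiableOn ℂ
      (fun z => Complex.exp (Real.pi * Complex.I * z / 12) * Complex.exp (L z)) U := by
    apply DifferentiableOn.mul
    · apply DifferentiableOn.cexp
      apply DifferentiableOn.div_const
      exact (differentiable_id.const_mul _).differentiableOn
    · exact hLdiff.cexp
  have hEdiff : DifferentiableOn ℂ DedekindEta U := hgdiff.congr hEeq
  constructor
  · exact (hEdiff.analyticOnNhd hU) z₀ hz₀U
  · rw [hEeq hz₀U]
    exact mul_ne_zero (Complex.exp_ne_zero _) (Complex.exp_ne_zero _)

lemma pfun_analyticOnNhd : AnalyticOnNhd ℂ Pfun UH := by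
  have hη : AnalyticOnNhd ℂ DedekindEta UH := fun z hz => (eta_analyticAt_ne_zero hz).1
  intro z hz
  have h1 : AnalyticAt ℂ (deriv DedekindEta) z := hη.deriv z hz
  have h2 : AnalyticAt ℂ (fun w => deriv DedekindEta w / DedekindEta w) z :=
    h1.div (hη z hz) (eta_analyticAt_ne_zero hz).2
  exact analyticAt_const.mul h2


lemma analyticOnNhd_iteratedDeriv {f : ℂ → ℂ} {U : Set ℂ}
    (hf : AnalyticOnNhd ℂ f U) (l : ℕ) : AnalyticOnNhd ℂ (iteratedDeriv l f) U := by
  induction l with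
  | zero => simpa [iteratedDeriv_zero] using hf
  | succ l ih => rw [iteratedDeriv_succ]; exact ih.deriv

lemma deriv_comb {U : Set ℂ} (hU : IsOpen U) {M : ℕ} {c : ℕ → ℂ → ℂ}
    (hc : ∀ l, AnalyticOnNhd ℂ (c l) U) {f : ℂ → ℂ} (hf : AnalyticOnNhd ℂ f U)
    {z : ℂ} (hz : z ∈ U) :
    deriv (fun w => ∑ l ∈ Finset.range M, c l w * iteratedDeriv l f w) z
      = ∑ l ∈ Finset.range M,
          (deriv (c l) z * iteratedDeriv l f z + c l z * iteratedDeriv (l+1) f z) := by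
  have hterm : ∀ l ∈ Finset.range M, HasDerivAt (fun w => c l w * iteratedDeriv l f w)
      (deriv (c l) z * iteratedDeriv l f z + c l z * iteratedDeriv (l+1) f z) z := by
    intro l _
    have h1 : HasDerivAt (c l) (deriv (c l) z) z := ((hc l z hz).differentiableAt).hasDerivAt
    have h2 : HasDerivAt (iteratedDeriv l f) (iteratedDeriv (l+1) f z) z := by
      rw [iteratedDeriv_succ]
      exact ((analyticOnNhd_iteratedDeriv hf l z hz).differentiableAt).hasDerivAt
    exact h1.mul h2
  exact (HasDerivAt.fun_sum hterm).deriv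

lemma dkIter_expand (k : ℝ) (j : ℕ) :
    ∃ c : ℕ → ℂ → ℂ,
      (∀ l, AnalyticOnNhd ℂ (c l) UH) ∧
      (∀ l, j < l → c l = fun _ => 0) ∧
      (∀ z ∈ UH, c j z = (1 / (2 * (Real.pi:ℂ) * Complex.I)) ^ j) ∧
      (∀ f : ℂ → ℂ, AnalyticOnNhd ℂ f UH → ∀ z ∈ UH,
        DkIter k j f z = ∑ l ∈ Finset.range (j+1), c l z * iteratedDeriv l f z) := by
  induction j with
  | zero =>
    refine ⟨fun l => if l = 0 then (fun _ => 1) else (fun _ => 0), ?_, ?_, ?_, ?_⟩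
    · intro l
      by_cases h : l = 0
      · simp only [h, if_true]; exact fun z hz => analyticAt_const
      · simp only [if_neg h]; exact fun z hz => analyticAt_const
    · intro l hl
      have hne : l ≠ 0 := by omega
      simp only [if_neg hne]
    · intro z hz; simp
    · intro f hf z hz
      simp [DkIter]
  | succ j ih =>
    obtain ⟨c, hca, hcz, hctop, hcid⟩ := ih
    set κ : ℂ := ((k + 2 * (j:ℝ) : ℝ) : ℂ) with hκ
    set κ₀ : ℂ := 1 / (2 * (Real.pi:ℂ) * Complex.I) with hκ₀
    set D : ℕ → ℂ → ℂ := fun l z =>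
      κ₀ * (deriv (c l) z + (if l = 0 then 0 else c (l-1) z)) + κ * Pfun z * c l z with hD
    have hDa : ∀ l, AnalyticOnNhd ℂ (D l) UH := by
      intro l z hz
      have h1 : AnalyticAt ℂ (deriv (c l)) z := (hca l).deriv z hz
      have h2 : AnalyticAt ℂ (fun w => if l = 0 then (0:ℂ) else c (l-1) w) z := by
        by_cases h : l = 0
        · simp only [h, if_true]; exact analyticAt_const
        · simp only [if_neg h]; exact hca (l-1) z hz
      exact (analyticAt_const.mul (h1.add h2)).add
        ((analyticAt_const.mul (pfun_analyticOnNhd z hz)).mul (hca l z hz))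
    refine ⟨D, hDa, ?_, ?_, ?_⟩
    · intro l hl
      have e1 : c l = fun _ => 0 := hcz l (by omega)
      have e2 : c (l-1) = fun _ => 0 := hcz (l-1) (by omega)
      funext z
      rw [hD]
      simp only [e1, e2, deriv_const']
      simp
    · intro z hz
      have e1 : c (j+1) = fun _ => 0 := hcz (j+1) (lt_add_one j)
      rw [hD]
      simp only [e1, deriv_const', Nat.add_sub_cancel, if_neg (Nat.succ_ne_zero j)]
      rw [hctop z hz]
      simp [pow_succ]
      ring
    · intro f hf z hz
      have hEv : DkIter k j f =ᶠ[𝓝 z]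
          (fun w => ∑ l ∈ Finset.range (j+1), c l w * iteratedDeriv l f w) :=
        Filter.eventuallyEq_of_mem (isOpen_UH.mem_nhds hz) (fun w hw => hcid f hf w hw)
      have hstep : DkIter k (j+1) f z
          = κ₀ * deriv (DkIter k j f) z + κ * Pfun z * DkIter k j f z := rfl
      rw [hstep, hEv.deriv_eq, deriv_comb isOpen_UH hca hf hz, hcid f hf z hz]
      have hsplit : ∑ l ∈ Finset.range (j+2), D l z * iteratedDeriv l f z
          = κ₀ * (∑ l ∈ Finset.range (j+2), deriv (c l) z * iteratedDeriv l f z)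
            + κ₀ * (∑ l ∈ Finset.range (j+2),
                (if l = 0 then 0 else c (l-1) z) * iteratedDeriv l f z)
            + κ * Pfun z * (∑ l ∈ Finset.range (j+2), c l z * iteratedDeriv l f z) := by
        rw [Finset.mul_sum, Finset.mul_sum, Finset.mul_sum, ← Finset.sum_add_distrib,
          ← Finset.sum_add_distrib]
        apply Finset.sum_congr rfl
        intro l _
        rw [hD]
        ring
      have e1 : c (j+1) = fun _ => 0 := hcz (j+1) (lt_add_one j)
      have h1 : ∑ l ∈ Finset.range (j+2), deriv (c l) z * iteratedDeriv l f z
          = ∑ l ∈ Finset.range (j+1), deriv (c l) z * iteratedDeriv l f z := by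
        rw [Finset.sum_range_succ, e1]
        simp
      have h2 : ∑ l ∈ Finset.range (j+2),
            (if l = 0 then 0 else c (l-1) z) * iteratedDeriv l f z
          = ∑ l ∈ Finset.range (j+1), c l z * iteratedDeriv (l+1) f z := by
        rw [Finset.sum_range_succ']
        simp
      have h3 : ∑ l ∈ Finset.range (j+2), c l z * iteratedDeriv l f z
          = ∑ l ∈ Finset.range (j+1), c l z * iteratedDeriv l f z := by
        rw [Finset.sum_range_succ, e1]
        simp
      rw [show (j+1)+1 = j+2 from rfl, hsplit, h1, h2, h3, Finset.sum_add_distrib, mul_add]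

lemma iteratedDeriv_zero_fun (n : ℕ) : iteratedDeriv n (fun _ : ℂ => (0:ℂ)) = fun _ => 0 := by
  induction n with
  | zero => simp [iteratedDeriv_zero]
  | succ n ih => rw [iteratedDeriv_succ, ih]; exact deriv_const' 0

lemma iteratedDeriv_comb {n : ℕ} {F : ℂ → Fin n → ℂ}
    (hF : ∀ i, AnalyticOnNhd ℂ (fun z => F z i) UH) (c : Fin n → ℂ) (l : ℕ) :
    ∀ z ∈ UH, iteratedDeriv l (fun w => ∑ i, c i * F w i) z
      = ∑ i, c i * iteratedDeriv l (fun w => F w i) z := by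
  induction l with
  | zero => intro z hz; simp
  | succ l ih =>
    intro z hz
    rw [iteratedDeriv_succ]
    have hEv : iteratedDeriv l (fun w => ∑ i, c i * F w i) =ᶠ[𝓝 z]
        (fun w => ∑ i, c i * iteratedDeriv l (fun w' => F w' i) w) :=
      Filter.eventuallyEq_of_mem (isOpen_UH.mem_nhds hz) (fun w hw => ih w hw)
    rw [hEv.deriv_eq]
    have hterm : ∀ i ∈ Finset.univ,
        HasDerivAt (fun w => c i * iteratedDeriv l (fun w' => F w' i) w)
          (c i * iteratedDeriv (l+1) (fun w' => F w' i) z) z := by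
      intro i _
      have h2 : HasDerivAt (iteratedDeriv l (fun w' => F w' i))
          (iteratedDeriv (l+1) (fun w' => F w' i) z) z := by
        rw [iteratedDeriv_succ]
        exact ((analyticOnNhd_iteratedDeriv (hF i) l z hz).differentiableAt).hasDerivAt
      exact HasDerivAt.const_mul (c i) h2
    exact (HasDerivAt.fun_sum hterm).deriv

lemma eventually_zero_of_iteratedDeriv_zero {h : ℂ → ℂ} {z₀ : ℂ}
    (hh : AnalyticAt ℂ h z₀) (hd : ∀ s, iteratedDeriv s h z₀ = 0) :
    ∀ᶠ z in 𝓝 z₀, h z = 0 := by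
  obtain ⟨p, hp⟩ := hh
  have hcoeff : ∀ n, p.coeff n = 0 := by
    intro n
    obtain ⟨r, hr⟩ := hp
    have h1 := hr.factorial_smul (1:ℂ) n
    rw [iteratedFDeriv_apply_eq_iteratedDeriv_mul_prod, hd n] at h1
    simp only [smul_zero] at h1
    have h2 : (n.factorial : ℂ) * p.coeff n = 0 := by
      rw [FormalMultilinearSeries.coeff, ← nsmul_eq_mul]
      exact h1
    rcases mul_eq_zero.mp h2 with h3 | h3
    · exact absurd h3 (by exact_mod_cast Nat.factorial_ne_zero n)
    · exact h3
  have hp0 : p = 0 := by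
    apply FormalMultilinearSeries.ext
    intro n
    exact FormalMultilinearSeries.coeff_eq_zero.mp (hcoeff n)
  rw [hp0] at hp
  exact hp.eventually_eq_zero

lemma derivs_vanish {m : ℕ} {A : ℕ → ℂ → ℂ} {h : ℂ → ℂ} {V : Set ℂ} (hV : IsOpen V)
    (hA : ∀ l, AnalyticOnNhd ℂ (A l) V) (hh : AnalyticOnNhd ℂ h V)
    (hm : ∀ z ∈ V, A m z ≠ 0)
    (hrel : ∀ z ∈ V, ∑ l ∈ Finset.range (m+1), A l z * iteratedDeriv l h z = 0)
    {z₀ : ℂ} (hz₀ : z₀ ∈ V) (hjet : ∀ l, l < m → iteratedDeriv l h z₀ = 0) :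
    ∀ s, iteratedDeriv s h z₀ = 0 := by
  by_cases hm0 : m = 0
  · subst hm0
    have hzero : ∀ z ∈ V, h z = 0 := by
      intro z hz
      have h1 := hrel z hz
      rw [zero_add, Finset.sum_range_one, iteratedDeriv_zero] at h1
      exact (mul_eq_zero.mp h1).resolve_left (hm z hz)
    intro s
    have hEv : h =ᶠ[𝓝 z₀] (fun _ => 0) :=
      Filter.eventuallyEq_of_mem (hV.mem_nhds hz₀) (fun w hw => hzero w hw)
    rw [hEv.iteratedDeriv_eq s, iteratedDeriv_zero_fun]
  · have hm1 : 1 ≤ m := by omega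
    have hsolve : ∀ z ∈ V, iteratedDeriv m h z
        = -(A m z)⁻¹ * ∑ l ∈ Finset.range m, A l z * iteratedDeriv l h z := by
      intro z hz
      have h1 := hrel z hz
      rw [Finset.sum_range_succ] at h1
      have hAm := hm z hz
      have h3 : A m z * iteratedDeriv m h z
          = -∑ l ∈ Finset.range m, A l z * iteratedDeriv l h z := by
        linear_combination h1
      calc iteratedDeriv m h z = (A m z)⁻¹ * (A m z * iteratedDeriv m h z) := by
            field_simp
        _ = -(A m z)⁻¹ * ∑ l ∈ Finset.range m, A l z * iteratedDeriv l h z := by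
            rw [h3]; ring
    have key : ∀ s, ∃ C : ℕ → ℂ → ℂ, (∀ l, AnalyticOnNhd ℂ (C l) V) ∧
        ∀ z ∈ V, iteratedDeriv s h z = ∑ l ∈ Finset.range m, C l z * iteratedDeriv l h z := by
      intro s
      induction s with
      | zero =>
        refine ⟨fun l => if l = 0 then (fun _ => 1) else fun _ => 0, ?_, ?_⟩
        · intro l
          by_cases h' : l = 0
          · simp only [h', if_true]; exact fun z hz => analyticAt_const
          · simp only [if_neg h']; exact fun z hz => analyticAt_const
        · intro z hz
          rw [Finset.sum_eq_single_of_mem 0 (Finset.mem_range.mpr (by omega))]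
          · simp
          · intro b _ hb; simp [hb]
      | succ s ihs =>
        obtain ⟨C, hCa, hCid⟩ := ihs
        refine ⟨fun l z => deriv (C l) z + (if l = 0 then 0 else C (l-1) z)
            + C (m-1) z * (-(A m z)⁻¹ * A l z), ?_, ?_⟩
        · intro l z hz
          have h1 : AnalyticAt ℂ (deriv (C l)) z := (hCa l).deriv z hz
          have h2 : AnalyticAt ℂ (fun w => if l = 0 then (0:ℂ) else C (l-1) w) z := by
            by_cases h' : l = 0
            · simp only [h', if_true]; exact analyticAt_const
            · simp only [if_neg h']; exact hCa (l-1) z hz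
          have h3 : AnalyticAt ℂ (fun w => C (m-1) w * (-(A m w)⁻¹ * A l w)) z :=
            (hCa (m-1) z hz).mul ((((hA m z hz).inv (hm z hz)).neg).mul (hA l z hz))
          exact (h1.add h2).add h3
        · intro z hz
          have hEv : iteratedDeriv s h =ᶠ[𝓝 z]
              (fun w => ∑ l ∈ Finset.range m, C l w * iteratedDeriv l h w) :=
            Filter.eventuallyEq_of_mem (hV.mem_nhds hz) (fun w hw => hCid w hw)
          rw [iteratedDeriv_succ, hEv.deriv_eq, deriv_comb hV hCa hh hz]
          have e2 : ∑ l ∈ Finset.range m, C l z * iteratedDeriv (l+1) h z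
              = ∑ l ∈ Finset.range (m+1),
                  (if l = 0 then 0 else C (l-1) z) * iteratedDeriv l h z := by
            rw [Finset.sum_range_succ']
            simp
          have e3 : ∑ l ∈ Finset.range (m+1),
                (if l = 0 then 0 else C (l-1) z) * iteratedDeriv l h z
              = (∑ l ∈ Finset.range m,
                  (if l = 0 then 0 else C (l-1) z) * iteratedDeriv l h z)
                + C (m-1) z * iteratedDeriv m h z := by
            rw [Finset.sum_range_succ, if_neg hm0]
          rw [Finset.sum_add_distrib, e2, e3, hsolve z hz, Finset.mul_sum, Finset.mul_sum,
            ← Finset.sum_add_distrib, ← Finset.sum_add_distrib]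
          apply Finset.sum_congr rfl
          intro l _
          ring
    intro s
    obtain ⟨C, _, hCid⟩ := key s
    rw [hCid z₀ hz₀]
    apply Finset.sum_eq_zero
    intro l hl
    rw [hjet l (Finset.mem_range.mp hl), mul_zero]

/-- If `F` is a vector-valued modular form of weight `k` for `ρ` and `υ` with
components linearly independent over `ℂ`, then `F, D_k F, …, D_k^{n-1} F` are
linearly independent over the ring `M` of classical integral-weight modular forms:
any relation `∑ g_j · D_k^j F = 0` with `g_j ∈ M` has all `g_j = 0`. -/
theorem dkIter_independent_over_M {n : ℕ} (k : ℝ)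
    (ρ : SL(2,ℤ) →* GL (Fin n) ℂ) (υ : SL(2,ℤ) → ℂ)
    (hυ : IsMultiplierSystem k υ)
    (F : ℂ → Fin n → ℂ) (hF : IsVVModularForm k ρ υ F)
    (hind : ∀ c : Fin n → ℂ, (∀ z : ℂ, 0 < z.im → ∑ i, c i * F z i = 0) → c = 0)
    (w : Fin n → ℤ) (g : Fin n → ℂ → ℂ)
    (hg : ∀ j, IsModularFormMS ((w j : ℝ)) (fun _ => 1) (g j))
    (hrel : ∀ z : ℂ, 0 < z.im → ∀ i : Fin n,
      ∑ j, g j z * DkIter k (j : ℕ) (fun w' => F w' i) z = 0) :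
    ∀ j, ∀ z : ℂ, 0 < z.im → g j z = 0 := by
  have hFa : ∀ i, AnalyticOnNhd ℂ (fun z => F z i) UH := by
    intro i
    have hd : DifferentiableOn ℂ (fun z => F z i) UH :=
      fun z hz => (hF.1 i z hz).differentiableWithinAt
    exact hd.analyticOnNhd isOpen_UH
  have hga : ∀ j, AnalyticOnNhd ℂ (g j) UH := by
    intro j
    have hd : DifferentiableOn ℂ (g j) UH :=
      fun z hz => ((hg j).1 z hz).differentiableWithinAt
    exact hd.analyticOnNhd isOpen_UH
  choose E hEa hEz hEtop hEid using fun j : Fin n => dkIter_expand k (j : ℕ)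
  set κ₀ : ℂ := 1 / (2 * (Real.pi:ℂ) * Complex.I) with hκ₀
  have hκ₀ne : κ₀ ≠ 0 := by
    rw [hκ₀]
    apply one_div_ne_zero
    exact mul_ne_zero (mul_ne_zero two_ne_zero
      (by exact_mod_cast Real.pi_ne_zero)) Complex.I_ne_zero
  set A : ℕ → ℂ → ℂ := fun l z => ∑ j : Fin n, g j z * E j l z with hA
  have hAa : ∀ l, AnalyticOnNhd ℂ (A l) UH := by
    intro l z hz
    exact Finset.univ.analyticAt_fun_sum (fun j _ => (hga j z hz).mul (hEa j l z hz))
  have hrelA : ∀ z ∈ UH, ∀ i,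
      ∑ l ∈ Finset.range n, A l z * iteratedDeriv l (fun w' => F w' i) z = 0 := by
    intro z hz i
    have h0 := hrel z hz i
    have h1 : ∀ j : Fin n, DkIter k (j:ℕ) (fun w' => F w' i) z
        = ∑ l ∈ Finset.range n, E j l z * iteratedDeriv l (fun w' => F w' i) z := by
      intro j
      rw [hEid j (fun w' => F w' i) (hFa i) z hz]
      apply Finset.sum_subset
      · apply Finset.range_subset_range.mpr
        have := j.isLt
        omega
      · intro x hxn hxj
        have hx : (j:ℕ) < x := by
          rw [Finset.mem_range] at hxn hxj
          omega
        rw [hEz j x hx]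
        simp
    calc ∑ l ∈ Finset.range n, A l z * iteratedDeriv l (fun w' => F w' i) z
        = ∑ l ∈ Finset.range n, ∑ j : Fin n,
            g j z * E j l z * iteratedDeriv l (fun w' => F w' i) z := by
          apply Finset.sum_congr rfl
          intro l _
          simp only [hA]
          rw [Finset.sum_mul]
      _ = ∑ j : Fin n, ∑ l ∈ Finset.range n,
            g j z * E j l z * iteratedDeriv l (fun w' => F w' i) z := Finset.sum_comm
      _ = ∑ j : Fin n, g j z * DkIter k (j:ℕ) (fun w' => F w' i) z := by
          apply Finset.sum_congr rfl
          intro j _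
          rw [h1 j, Finset.mul_sum]
          apply Finset.sum_congr rfl
          intro l _
          ring
      _ = 0 := h0
  have claim : ∀ m : Fin n, (∀ j : Fin n, m < j → ∀ z ∈ UH, g j z = 0) →
      ∀ z ∈ UH, g m z = 0 := by
    intro m hhigher
    by_contra hcon
    push_neg at hcon
    obtain ⟨z₀, hz₀, hgm⟩ := hcon
    have hAm : ∀ z ∈ UH, A (m:ℕ) z = g m z * κ₀ ^ (m:ℕ) := by
      intro z hz
      simp only [hA]
      rw [Finset.sum_eq_single m]
      · rw [hEtop m z hz]
      · intro j _ hj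
        rcases lt_or_gt_of_ne hj with h' | h'
        · rw [hEz j (m:ℕ) (by exact_mod_cast h')]
          simp
        · rw [hhigher j h' z hz]
          ring
      · intro hm'
        exact absurd (Finset.mem_univ m) hm'
    have hAhigh : ∀ l, (m:ℕ) < l → ∀ z ∈ UH, A l z = 0 := by
      intro l hl z hz
      simp only [hA]
      apply Finset.sum_eq_zero
      intro j _
      by_cases hj : (j:ℕ) < l
      · rw [hEz j l hj]
        simp
      · have hmj : m < j := by
          rw [Fin.lt_def]
          omega
        rw [hhigher j hmj z hz]
        ring
    have hrelT : ∀ z ∈ UH, ∀ i, ∑ l ∈ Finset.range ((m:ℕ)+1),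
        A l z * iteratedDeriv l (fun w' => F w' i) z = 0 := by
      intro z hz i
      have hsub : Finset.range ((m:ℕ)+1) ⊆ Finset.range n :=
        Finset.range_subset_range.mpr (by have := m.isLt; omega)
      rw [Finset.sum_subset hsub]
      · exact hrelA z hz i
      · intro x hxn hxm
        rw [Finset.mem_range] at hxn hxm
        rw [hAhigh x (by omega) z hz, zero_mul]
    have hnotli : ¬ LinearIndependent ℂ
        (fun i : Fin n => fun l : Fin (m:ℕ) =>
          iteratedDeriv (l:ℕ) (fun w' => F w' i) z₀) := by
      intro hli
      have hcard := hli.fintype_card_le_finrank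
      rw [Module.finrank_fin_fun, Fintype.card_fin] at hcard
      have := m.isLt
      omega
    obtain ⟨c, hc0, hcne⟩ := Fintype.not_linearIndependent_iff.mp hnotli
    set hfun : ℂ → ℂ := fun w' => ∑ i, c i * F w' i with hhfun
    have hha : AnalyticOnNhd ℂ hfun UH := by
      intro z hz
      exact Finset.univ.analyticAt_fun_sum (fun i _ => analyticAt_const.mul (hFa i z hz))
    have hjet : ∀ l, l < (m:ℕ) → iteratedDeriv l hfun z₀ = 0 := by
      intro l hl
      rw [hhfun, iteratedDeriv_comb hFa c l z₀ hz₀]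
      have h2 := congrFun hc0 ⟨l, hl⟩
      simpa using h2
    have hAmne : A (m:ℕ) z₀ ≠ 0 := by
      rw [hAm z₀ hz₀]
      exact mul_ne_zero hgm (pow_ne_zero _ hκ₀ne)
    have hev : ∀ᶠ w' in nhds z₀, A (m:ℕ) w' ≠ 0 :=
      ((hAa (m:ℕ) z₀ hz₀).continuousAt).eventually_ne hAmne
    obtain ⟨W, hWsub, hWopen, hWz₀⟩ := mem_nhds_iff.mp hev
    set V : Set ℂ := W ∩ UH with hV
    have hVopen : IsOpen V := hWopen.inter isOpen_UH
    have hz₀V : z₀ ∈ V := ⟨hWz₀, hz₀⟩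
    have hrelV : ∀ z ∈ V, ∑ l ∈ Finset.range ((m:ℕ)+1),
        A l z * iteratedDeriv l hfun z = 0 := by
      intro z hz
      have hzU : z ∈ UH := hz.2
      have hterm : ∀ l ∈ Finset.range ((m:ℕ)+1), A l z * iteratedDeriv l hfun z
          = ∑ i, c i * (A l z * iteratedDeriv l (fun w' => F w' i) z) := by
        intro l _
        rw [hhfun, iteratedDeriv_comb hFa c l z hzU, Finset.mul_sum]
        apply Finset.sum_congr rfl
        intro i _
        ring
      rw [Finset.sum_congr rfl hterm, Finset.sum_comm]
      apply Finset.sum_eq_zero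
      intro i _
      rw [← Finset.mul_sum, hrelT z hzU i, mul_zero]
    have hall : ∀ s, iteratedDeriv s hfun z₀ = 0 :=
      derivs_vanish hVopen (fun l z hz => hAa l z hz.2) (fun z hz => hha z hz.2)
        (fun z hz => hWsub hz.1) hrelV hz₀V hjet
    have hev0 : ∀ᶠ z in nhds z₀, hfun z = 0 :=
      eventually_zero_of_iteratedDeriv_zero (hha z₀ hz₀) hall
    have hzero : Set.EqOn hfun 0 UH :=
      AnalyticOnNhd.eqOn_zero_of_preconnected_of_eventuallyEq_zero hha
        preconnected_UH hz₀ hev0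
    have hc : c = 0 := hind c (fun z hz => hzero hz)
    obtain ⟨i, hi⟩ := hcne
    rw [hc] at hi
    exact hi rfl
  have main : ∀ d : ℕ, ∀ j : Fin n, n - (j:ℕ) ≤ d + 1 → ∀ z ∈ UH, g j z = 0 := by
    intro d
    induction d with
    | zero =>
      intro j hj z hz
      apply claim j ?_ z hz
      intro j' hjj'
      exfalso
      have h1 := j'.isLt
      rw [Fin.lt_def] at hjj'
      omega
    | succ d ih =>
      intro j hj z hz
      apply claim j ?_ z hz
      intro j' hjj' w' hw'
      apply ih j' ?_ w' hw'
      rw [Fin.lt_def] at hjj'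
      have := j'.isLt
      omega
  intro j z hz
  exact main n j (by omega) z hz
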